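/- arXiv:1808.05072 — 5 statements merged into one kernel-verified Lean document; each statement's English description precedes it below -/
import Mathlib

section
/- Let L be an n×n symmetric matrix over the field with two elements 𝔽₂ whose diagonal entries are all 1. Then the linear system L·a = 𝟙 (where 𝟙 is the all-ones column vector) has a solution a ∈ 𝔽₂ⁿ. -/
open Matrix LinearMap

private lemma zmod2_sq (a : ZMod 2) : a * a = a := by revert a; decide

private lemma quad_eq_sum (n : ℕ) (L : Matrix (Fin n) (Fin n) (ZMod 2))
    (hsym : L.transpose = L) (hdiag : ∀ i, L i i = 1) (x : Fin n → ZMod 2) :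
    x ⬝ᵥ L.mulVec x = ∑ i, x i := by
  classical
  have hsym' : ∀ i j, L i j = L j i := fun i j => by
    conv_lhs => rw [← hsym]
    exact Matrix.transpose_apply L i j
  simp only [dotProduct, Matrix.mulVec, Finset.mul_sum]
  rw [← Finset.sum_product', Finset.univ_product_univ]
  have hsplit : (Finset.univ : Finset (Fin n × Fin n)) =
      (Finset.univ.filter fun p => p.1 = p.2) ∪ (Finset.univ.filter fun p => p.1 ≠ p.2) := by
    simp [← Finset.filter_or, em]
  rw [hsplit, Finset.sum_union (by simp [Finset.disjoint_filter])]
  have hdiagsum : ∑ p ∈ (Finset.univ.filter fun p : Fin n × Fin n => p.1 = p.2),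
      x p.1 * (L p.1 p.2 * x p.2) = ∑ i, x i := by
    rw [Finset.sum_filter, ← Finset.univ_product_univ, Finset.sum_product]
    simp only [Finset.sum_ite_eq, Finset.mem_univ, if_true]
    refine Finset.sum_congr rfl fun i _ => ?_
    rw [hdiag, one_mul, zmod2_sq]
  have hoff : ∑ p ∈ (Finset.univ.filter fun p : Fin n × Fin n => p.1 ≠ p.2),
      x p.1 * (L p.1 p.2 * x p.2) = 0 := by
    apply Finset.sum_involution (fun p _ => (p.2, p.1))
    · intro p _
      simp only
      rw [hsym' p.2 p.1]
      ring_nf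
      rw [mul_two]
      exact CharTwo.add_self_eq_zero _
    · intro p hp _ h
      simp only [Finset.mem_filter, Finset.mem_univ, true_and] at hp
      exact hp (congrArg Prod.fst h).symm
    · intro p hp
      simp only [Finset.mem_filter, Finset.mem_univ, true_and] at hp ⊢
      exact fun h => hp h.symm
    · intro p hp; rfl
  rw [hdiagsum, hoff, add_zero]

theorem linear_system_all_ones_solvable (n : ℕ) (L : Matrix (Fin n) (Fin n) (ZMod 2))
    (hsym : L.transpose = L) (hdiag : ∀ i, L i i = 1) :
    ∃ a : Fin n → ZMod 2, L.mulVec a = fun _ => 1 := by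
  classical
  set B : (Fin n → ZMod 2) →ₗ[ZMod 2] (Fin n → ZMod 2) →ₗ[ZMod 2] ZMod 2 :=
    Matrix.toLinearMap₂' (ZMod 2) L with hB
  set φ : Module.Dual (ZMod 2) (Fin n → ZMod 2) := ∑ i, LinearMap.proj i with hφ
  have hφapp : ∀ x, φ x = ∑ i, x i := fun x => by simp [hφ]
  have hmem : φ ∈ (LinearMap.ker B).dualAnnihilator := by
    rw [Submodule.mem_dualAnnihilator]
    intro x hx
    have hx0 : B x x = 0 := by rw [LinearMap.mem_ker.mp hx]; rfl
    rw [hB, Matrix.toLinearMap₂'_apply'] at hx0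
    rw [hφapp x, ← quad_eq_sum n L hsym hdiag x]
    exact hx0
  rw [LinearMap.dualAnnihilator_ker_eq_range_flip] at hmem
  obtain ⟨y, hy⟩ := hmem
  refine ⟨y, funext fun i => ?_⟩
  have h2 := congrArg (fun f => f (Pi.single i 1)) hy
  simp only [LinearMap.flip_apply, hB, Matrix.toLinearMap₂'_apply'] at h2
  rw [single_dotProduct, one_mul] at h2
  rw [h2, hφapp]
  simp
end

section
/- Let L be an n×n symmetric matrix over 𝔽₂ with all diagonal entries equal to 1. Then the all-ones vector 𝟙 lies in the column space (range) of L, equivalently 𝟙 is orthogonal (with respect to the standard bilinear form over 𝔽₂) to every vector in the kernel of L. -/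
theorem all_ones_in_range (n : ℕ) (L : Matrix (Fin n) (Fin n) (ZMod 2))
    (hsym : L.transpose = L) (hdiag : ∀ i, L i i = 1) :
    (∀ a : Fin n → ZMod 2, L.mulVec a = 0 → ∑ i, a i = 0) ∧
      (fun _ => (1 : ZMod 2)) ∈ Set.range L.mulVec := by
  have hx2 : ∀ x : ZMod 2, x * x = x := by decide
  have hsym' : ∀ i j, L j i = L i j := fun i j =>
    (congrFun (congrFun hsym j) i).symm.trans (Matrix.transpose_apply L j i)
  have key : ∀ a : Fin n → ZMod 2, L.mulVec a = 0 → ∑ i, a i = 0 := by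
    intro a ha
    have h0 : ∑ i, a i * L.mulVec a i = 0 := by simp [ha]
    have hexp : ∑ i, a i * L.mulVec a i
        = ∑ p ∈ Finset.univ ×ˢ (Finset.univ : Finset (Fin n)),
            a p.1 * L p.1 p.2 * a p.2 := by
      rw [Finset.sum_product]
      simp [Matrix.mulVec, dotProduct, Finset.mul_sum, mul_assoc]
    have hsplit : ∑ p ∈ Finset.univ ×ˢ (Finset.univ : Finset (Fin n)),
          a p.1 * L p.1 p.2 * a p.2
        = (∑ p ∈ (Finset.univ : Finset (Fin n)).diag, a p.1 * L p.1 p.2 * a p.2)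
          + ∑ p ∈ (Finset.univ : Finset (Fin n)).offDiag, a p.1 * L p.1 p.2 * a p.2 := by
      rw [← Finset.sum_union (Finset.disjoint_diag_offDiag _), Finset.diag_union_offDiag]
    have hdiagsum : ∑ p ∈ (Finset.univ : Finset (Fin n)).diag,
        a p.1 * L p.1 p.2 * a p.2 = ∑ i, a i := by
      rw [Finset.sum_diag]
      exact Finset.sum_congr rfl fun i _ => by rw [hdiag, mul_one, hx2]
    have hoff : ∑ p ∈ (Finset.univ : Finset (Fin n)).offDiag,
        a p.1 * L p.1 p.2 * a p.2 = 0 := by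
      refine Finset.sum_involution (fun p _ => p.swap) ?_ ?_ ?_ ?_
      · intro p hp
        have : a p.2 * L p.2 p.1 * a p.1 = a p.1 * L p.1 p.2 * a p.2 := by
          rw [hsym']; ring
        rw [Prod.fst_swap, Prod.snd_swap, this]
        exact CharTwo.add_self_eq_zero _
      · intro p hp _
        have := (Finset.mem_offDiag.mp hp).2.2
        simp [Prod.ext_iff]
        intro h; exact absurd h.symm this
      · intro p hp
        obtain ⟨h1, h2, h3⟩ := Finset.mem_offDiag.mp hp
        exact Finset.mem_offDiag.mpr ⟨h2, h1, fun h => h3 h.symm⟩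
      · intro p hp; simp
    rw [hexp, hsplit, hdiagsum, hoff, add_zero] at h0
    exact h0
  refine ⟨key, ?_⟩
  by_contra hmem
  have hnot : (fun _ => (1 : ZMod 2)) ∉ LinearMap.range L.mulVecLin := by
    intro ⟨x, hx⟩
    exact hmem ⟨x, hx⟩
  obtain ⟨f, hf1, hf2⟩ :=
    Submodule.exists_dual_map_eq_bot_of_notMem hnot inferInstance
  set b : Fin n → ZMod 2 := fun i => f (Pi.single i 1) with hb
  have hfx : ∀ x : Fin n → ZMod 2, f x = ∑ i, x i * b i := fun x => by
    rw [LinearMap.pi_apply_eq_sum_univ f x]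
    refine Finset.sum_congr rfl fun i _ => ?_
    have hone : (fun j => if i = j then (1 : ZMod 2) else 0) = Pi.single i 1 := by
      funext j; simp [Pi.single_apply, eq_comm]
    rw [smul_eq_mul, hone, hb]
  have hz : ∀ a : Fin n → ZMod 2, f (L.mulVec a) = 0 := by
    intro a
    have : L.mulVec a ∈ LinearMap.range L.mulVecLin := ⟨a, rfl⟩
    have := Submodule.mem_map_of_mem (f := f) this
    rw [hf2] at this
    simpa using this
  have hLb : L.mulVec b = 0 := by
    funext j
    have h := hz (Pi.single j 1)
    rw [hfx] at h
    have hmv : ∀ i, L.mulVec (Pi.single j 1) i = L i j := by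
      intro i; simp [Matrix.mulVec_single]
    simp only [hmv] at h
    simp only [Matrix.mulVec, dotProduct, Pi.zero_apply]
    rw [← h]
    exact Finset.sum_congr rfl fun i _ => by rw [hsym']
  have hsum := key b hLb
  have : f (fun _ => 1) = 0 := by rw [hfx]; simpa using hsum
  exact hf1 this
end

section
/- Over 𝔽₂, for any symmetric matrix L, every vector a in the kernel of L satisfies aᵀ·L·a = 0, and if additionally all diagonal entries of L are 1 then ∑ᵢ aᵢ = ∑ᵢ Lᵢᵢ·aᵢ² = aᵀLa + 2·(∑_{i<j} Lᵢⱼaᵢaⱼ) = 0, i.e., a has even weight. -/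
theorem kernel_vector_even_weight (n : ℕ) (L : Matrix (Fin n) (Fin n) (ZMod 2))
    (hsym : L.transpose = L) (hdiag : ∀ i, L i i = 1)
    (a : Fin n → ZMod 2) (ha : L.mulVec a = 0) :
    dotProduct a (L.mulVec a) = 0 ∧ ∑ i, a i = 0 := by
  refine ⟨by rw [ha]; simp [dotProduct], ?_⟩
  have h0 : dotProduct a (L.mulVec a) = 0 := by rw [ha]; simp [dotProduct]
  have hexp : dotProduct a (L.mulVec a)
      = ∑ p ∈ Finset.univ ×ˢ Finset.univ, a p.1 * (L p.1 p.2 * a p.2) := by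
    rw [Finset.sum_product]
    simp [dotProduct, Matrix.mulVec, Finset.mul_sum]
  have hsplit : (Finset.univ ×ˢ Finset.univ : Finset (Fin n × Fin n))
      = (Finset.univ : Finset (Fin n × Fin n)).filter (fun p => p.1 = p.2)
        ∪ (Finset.univ : Finset (Fin n)).offDiag := by
    ext p
    by_cases h : p.1 = p.2 <;> simp [Finset.mem_offDiag, h]
  have hsq : ∀ x : ZMod 2, x * x = x := by decide
  have h2 : (2 : ZMod 2) = 0 := by decide
  have hoff : ∑ p ∈ (Finset.univ : Finset (Fin n)).offDiag,
      a p.1 * (L p.1 p.2 * a p.2) = 0 := by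
    apply Finset.sum_involution (fun p _ => (p.2, p.1))
    · intro p hp
      have hs : L p.2 p.1 = L p.1 p.2 := by
        have := congrFun (congrFun hsym p.2) p.1
        simpa [Matrix.transpose] using this.symm
      show a p.1 * (L p.1 p.2 * a p.2) + a p.2 * (L p.2 p.1 * a p.1) = 0
      rw [hs]; ring_nf; rw [h2]; ring
    · intro p hp h heq
      have h1 : p.2 = p.1 := congrArg Prod.fst heq
      simp [Finset.mem_offDiag] at hp
      exact hp h1.symm
    · intro p hp
      simp [Finset.mem_offDiag] at hp ⊢
      exact fun h => hp h.symm
    · intro p hp; rfl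
  have hdisj : Disjoint ((Finset.univ : Finset (Fin n × Fin n)).filter (fun p => p.1 = p.2))
      ((Finset.univ : Finset (Fin n)).offDiag) := by
    rw [Finset.disjoint_left]
    intro p hp hp'
    simp [Finset.mem_offDiag] at hp hp'
    exact hp' hp
  have hdiagsum : ∑ p ∈ (Finset.univ : Finset (Fin n × Fin n)).filter (fun p => p.1 = p.2),
      a p.1 * (L p.1 p.2 * a p.2) = ∑ i, a i := by
    rw [Finset.sum_filter, Fintype.sum_prod_type]
    simp only [Finset.sum_ite_eq, Finset.mem_univ, if_true]
    refine Finset.sum_congr rfl fun i _ => ?_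
    rw [hdiag, one_mul, hsq]
  have := h0
  rw [hexp, hsplit, Finset.sum_union hdisj, hoff, add_zero, hdiagsum] at this
  exact this
end

section
/- Let L be an n×n symmetric matrix over 𝔽₂ with all diagonal entries equal to 1, and fix an extra unknown a∞. The augmented system aᵢ + ∑_{j≠i} Lᵢⱼ aⱼ + a∞ = 0 (for i = 1,…,n) together with a∞ = 1 always has a solution over 𝔽₂. -/
theorem augmented_system_solvable (n : ℕ) (l : Fin n → Fin n → ZMod 2)
    (hsym : ∀ i j, l i j = l j i) :
    ∃ (a : Fin n → ZMod 2) (aInf : ZMod 2), aInf = 1 ∧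
      ∀ i, a i + (∑ j ∈ Finset.univ.filter (fun j => j ≠ i), l i j * a j) + aInf = 0 := by
  classical
  set M : Matrix (Fin n) (Fin n) (ZMod 2) :=
    fun i j => if i = j then 1 else l i j with hMdef
  have hMsym : ∀ i j, M i j = M j i := by
    intro i j
    by_cases h : i = j
    · subst h; rfl
    · simp [hMdef, h, Ne.symm h, hsym i j]
  have hsq : ∀ x : ZMod 2, x * x = x := by decide
  have hadd : ∀ x : ZMod 2, x + x = 0 := by decide
  have hkey : (fun _ => (1 : ZMod 2)) ∈ LinearMap.range M.mulVecLin := by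
    rw [← Subspace.forall_mem_dualAnnihilator_apply_eq_zero_iff]
    intro φ hφ
    rw [Submodule.mem_dualAnnihilator] at hφ
    set y : Fin n → ZMod 2 := fun i => φ (fun j => if i = j then 1 else 0) with hy
    have hφx : ∀ x : Fin n → ZMod 2, φ x = ∑ i, x i * y i := by
      intro x
      simpa [smul_eq_mul] using LinearMap.pi_apply_eq_sum_univ φ x
    have hann : ∀ x : Fin n → ZMod 2, ∑ i, (M.mulVec x) i * y i = 0 := by
      intro x
      rw [← hφx]
      exact hφ _ ⟨x, rfl⟩
    have hMy : ∀ j, (M.mulVec y) j = 0 := by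
      intro j
      have h1 := hann (fun k => if j = k then 1 else 0)
      have h2 : ∀ i, (M.mulVec (fun k => if j = k then (1 : ZMod 2) else 0)) i = M i j := by
        intro i
        simp [Matrix.mulVec, dotProduct, mul_ite]
      rw [Finset.sum_congr rfl (fun i _ => by rw [h2 i])] at h1
      calc (M.mulVec y) j = ∑ i, M j i * y i := rfl
        _ = ∑ i, M i j * y i := by
            exact Finset.sum_congr rfl fun i _ => by rw [hMsym j i]
        _ = 0 := h1
    have htot : ∑ p ∈ (Finset.univ : Finset (Fin n)) ×ˢ Finset.univ,
        y p.1 * M p.1 p.2 * y p.2 = 0 := by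
      rw [Finset.sum_product]
      calc ∑ j, ∑ i, y j * M j i * y i
          = ∑ j, y j * (M.mulVec y) j := by
            refine Finset.sum_congr rfl fun j _ => ?_
            simp [Matrix.mulVec, dotProduct, Finset.mul_sum, mul_assoc]
        _ = 0 := by simp [hMy]
    have hdiag_off : (Finset.univ : Finset (Fin n)).diag ∪ Finset.univ.offDiag
        = Finset.univ ×ˢ Finset.univ := Finset.diag_union_offDiag _
    have hsplit : (∑ p ∈ (Finset.univ : Finset (Fin n)).diag, y p.1 * M p.1 p.2 * y p.2)
        + ∑ p ∈ (Finset.univ : Finset (Fin n)).offDiag, y p.1 * M p.1 p.2 * y p.2 = 0 := by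
      rw [← Finset.sum_union (Finset.disjoint_diag_offDiag _), hdiag_off, htot]
    have hoff : ∑ p ∈ (Finset.univ : Finset (Fin n)).offDiag,
        y p.1 * M p.1 p.2 * y p.2 = 0 := by
      refine Finset.sum_involution (fun p _ => Prod.swap p) ?_ ?_ ?_ ?_
      · intro p hp
        have : y p.2 * M p.2 p.1 * y p.1 = y p.1 * M p.1 p.2 * y p.2 := by
          rw [hMsym p.2 p.1]; ring
        show y p.1 * M p.1 p.2 * y p.2 + y p.2 * M p.2 p.1 * y p.1 = 0
        rw [this]; exact hadd _
      · intro p hp _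
        have hne : p.1 ≠ p.2 := (Finset.mem_offDiag.mp hp).2.2
        show p.swap ≠ p
        intro hc
        exact hne (congrArg Prod.snd hc)
      · intro p hp
        rcases Finset.mem_offDiag.mp hp with ⟨_, _, hne⟩
        exact Finset.mem_offDiag.mpr ⟨Finset.mem_univ _, Finset.mem_univ _, Ne.symm hne⟩
      · intro p hp; rfl
    have hdiag : ∑ p ∈ (Finset.univ : Finset (Fin n)).diag,
        y p.1 * M p.1 p.2 * y p.2 = ∑ i, y i := by
      rw [Finset.sum_diag]
      refine Finset.sum_congr rfl fun i _ => ?_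
      simp [hMdef, hsq]
    rw [hoff, add_zero, hdiag] at hsplit
    rw [hφx]
    simpa using hsplit
  obtain ⟨a, ha⟩ := hkey
  refine ⟨a, 1, rfl, fun i => ?_⟩
  have hi : ∑ j, M i j * a j = 1 := by
    have := congrFun ha i
    simpa [Matrix.mulVecLin, Matrix.mulVec, dotProduct] using this
  have hfil : Finset.univ.filter (fun j => j ≠ i) = Finset.univ.erase i := by
    ext j; simp [Finset.mem_erase, and_comm]
  have hM_ii : M i i = 1 := by simp [hMdef]
  have hsplit2 : a i + ∑ j ∈ Finset.univ.erase i, M i j * a j = 1 := by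
    rw [← Finset.add_sum_erase Finset.univ (fun j => M i j * a j) (Finset.mem_univ i)] at hi
    rw [hM_ii, one_mul] at hi
    exact hi
  have herase : ∑ j ∈ Finset.univ.erase i, M i j * a j
      = ∑ j ∈ Finset.univ.erase i, l i j * a j := by
    refine Finset.sum_congr rfl fun j hj => ?_
    have : j ≠ i := (Finset.mem_erase.mp hj).1
    simp [hMdef, Ne.symm this]
  rw [hfil, ← herase, hsplit2]
  exact hadd 1
end

section
/- A symmetric matrix over 𝔽₂ with all diagonal entries equal to 1 can be singular, but its kernel is contained in the even-weight hyperplane; equivalently, the orthogonal complement (kernel) of such L meets the coset of odd-weight vectors trivially. -/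
theorem kernel_le_even_weight_hyperplane (n : ℕ) (L : Matrix (Fin n) (Fin n) (ZMod 2))
    (hsym : L.transpose = L) (hdiag : ∀ i, L i i = 1) :
    LinearMap.ker (Matrix.mulVecLin L) ≤
      LinearMap.ker (∑ i, LinearMap.proj (R := ZMod 2) (φ := fun _ : Fin n => ZMod 2) i) := by
  intro a ha
  simp only [LinearMap.mem_ker, Matrix.mulVecLin_apply] at ha
  have key : dotProduct a (L.mulVec a) = 0 := by rw [ha]; simp
  have expand : dotProduct a (L.mulVec a)
      = ∑ p : Fin n × Fin n, a p.1 * L p.1 p.2 * a p.2 := by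
    rw [Fintype.sum_prod_type]
    simp [dotProduct, Matrix.mulVec, Finset.mul_sum, mul_assoc]
  have split : ∑ p : Fin n × Fin n, a p.1 * L p.1 p.2 * a p.2
      = ∑ i, a i * L i i * a i := by
    rw [← Finset.sum_filter_add_sum_filter_not Finset.univ (fun p : Fin n × Fin n => p.1 = p.2)]
    have h1 : ∑ p ∈ Finset.univ.filter (fun p : Fin n × Fin n => p.1 = p.2),
        a p.1 * L p.1 p.2 * a p.2 = ∑ i, a i * L i i * a i := by
      rw [Finset.sum_filter]
      rw [Fintype.sum_prod_type]
      apply Finset.sum_congr rfl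
      intro i _
      simp
    have h2 : ∑ p ∈ Finset.univ.filter (fun p : Fin n × Fin n => ¬ p.1 = p.2),
        a p.1 * L p.1 p.2 * a p.2 = 0 := by
      apply Finset.sum_involution (fun p _ => Prod.swap p)
      · intro p hp
        have : L p.2 p.1 = L p.1 p.2 := by
          conv_lhs => rw [← hsym]
          rfl
        simp [Prod.swap, this]
        ring_nf
        have h2 : (2 : ZMod 2) = 0 := rfl
        rw [h2, mul_zero]
      · intro p hp _
        simp only [Finset.mem_filter] at hp
        intro h
        exact hp.2 (congrArg Prod.fst h.symm)
      · intro p hp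
        simp only [Finset.mem_filter, Finset.mem_univ, true_and] at hp ⊢
        exact fun h => hp h.symm
      · intro p hp
        rfl
    rw [h1, h2, add_zero]
  have hsum : ∑ i, a i = 0 := by
    have : ∑ i, a i * L i i * a i = ∑ i, a i := by
      apply Finset.sum_congr rfl
      intro i _
      rw [hdiag i, mul_one]
      have h2 : ∀ x : ZMod 2, x * x = x := by decide
      exact h2 _
    rw [← this, ← split, ← expand]
    exact key
  simp only [LinearMap.mem_ker, LinearMap.sum_apply, LinearMap.proj_apply]
  exact hsum
end
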